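/- Let F and G be finite transitive frames validating Wid_1^+ whose inverse skeletons are finite trees, with representation trees rt(F) and rt(G). If rt(F) ⊑ rt(G), then G is reducible to F. -/

import Mathlib

/-- A Kripke frame: a set of worlds with a binary relation. -/
structure Frame where
  World : Type
  rel : World → World → Prop

/-- `f` is a reduction (surjective p-morphism) of `F` to `G`. -/
def Reduction (F G : Frame) (f : F.World → G.World) : Prop :=
  Function.Surjective f ∧
  (∀ w u, F.rel w u → G.rel (f w) (f u)) ∧
  (∀ w v, G.rel (f w) v → ∃ u, F.rel w u ∧ f u = v)

/-- `F` is reducible to `G`. -/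
def Reducible (F G : Frame) : Prop := ∃ f, Reduction F G f

/-- The subframe of `F` generated by the point `w`. -/
def Frame.genSub (F : Frame) (w : F.World) : Frame :=
  ⟨{v // Relation.ReflTransGen F.rel w v}, fun a b => F.rel a.1 b.1⟩

/-- Modal formulas over countably many propositional variables. -/
inductive Formula where
  | var : ℕ → Formula
  | bot : Formula
  | imp : Formula → Formula → Formula
  | box : Formula → Formula
deriving DecidableEq

namespace Formula

def neg (a : Formula) : Formula := .imp a .bot
def top : Formula := .imp .bot .bot
def and (a b : Formula) : Formula := neg (.imp a (neg b))
def or (a b : Formula) : Formula := .imp (neg a) b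
def dia (a : Formula) : Formula := neg (.box (neg a))

/-- Finite conjunction of a list of formulas. -/
def bigConj (l : List Formula) : Formula := l.foldr and top

/-- Finite disjunction of a list of formulas. -/
def bigDisj (l : List Formula) : Formula := l.foldr or .bot

end Formula

/-- Kripke satisfaction of a formula at a world of `F` under valuation `V`. -/
def Sat (F : Frame) (V : ℕ → F.World → Prop) : F.World → Formula → Prop
  | w, .var n => V n w
  | _, .bot => False
  | w, .imp a b => Sat F V w a → Sat F V w b
  | w, .box a => ∀ u, F.rel w u → Sat F V u a

/-- `φ` is valid at the point `w` of `F` (true under all valuations). -/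
def SatAll (F : Frame) (w : F.World) (φ : Formula) : Prop := ∀ V, Sat F V w φ

/-- `φ` is valid in the frame `F`. -/
def Valid (F : Frame) (φ : Formula) : Prop := ∀ V w, Sat F V w φ

/-- The weak width formula `Wid_n^+`, with `q` encoded as variable `0` and
`p_i` as variable `i+1`:
`q ∧ ◇(□¬q ∧ ⋀_{i≤n} ◇p_i) → ⋁_{0 ≤ i ≠ j ≤ n} ◇(p_i ∧ (p_j ∨ ◇p_j))`. -/
def widPlus (n : ℕ) : Formula :=
  .imp
    (.and (.var 0)
      (Formula.dia (.and (.box (Formula.neg (.var 0)))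
        (Formula.bigConj ((List.finRange (n + 1)).map fun i => Formula.dia (.var (i + 1)))))))
    (Formula.bigDisj ((List.finRange (n + 1)).flatMap fun i =>
      (List.finRange (n + 1)).flatMap fun j =>
        if i = j then []
        else [Formula.dia (.and (.var (i + 1))
          (.or (.var (j + 1)) (Formula.dia (.var (j + 1)))))]))

/-- `m ≼ n` iff `m = n = 0` or `0 < m ≤ n`. -/
def pre (m n : ℕ) : Prop := (m = 0 ∧ n = 0) ∨ (0 < m ∧ m ≤ n)

/-- A finite ω-labeled tree in standard representation: a root label, the list
of subtrees generated by the root's immediate successors labeled `0`, and the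
list of those labeled `> 0` (the last one having minimal root label). -/
inductive OTree where
  | node : ℕ → List OTree → List OTree → OTree

/-- The root label of an ω-tree. -/
def OTree.label : OTree → ℕ
  | node s _ _ => s

mutual
  /-- The height of an ω-tree. -/
  def OTree.height : OTree → ℕ
    | .node _ l r => 1 + max (OTree.heights l) (OTree.heights r)
  def OTree.heights : List OTree → ℕ
    | [] => 0
    | t :: ts => max t.height (OTree.heights ts)
end

mutual
  /-- The number of nodes labeled `0` in an ω-tree. -/
  def OTree.zeros : OTree → ℕ
    | .node s l r => (if s = 0 then 1 else 0) + OTree.zerosL l + OTree.zerosL r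
  def OTree.zerosL : List OTree → ℕ
    | [] => 0
    | t :: ts => t.zeros + OTree.zerosL ts
end

mutual
  /-- Well-formedness of the standard representation: subtrees in the first
  list have root label `0`, subtrees in the second list have positive root
  label, and the last of them has minimal root label. -/
  def OTree.wf : OTree → Prop
    | .node _ l r =>
      OTree.wfZ l ∧ OTree.wfP r ∧ (∀ a ∈ r.getLast?, ∀ t ∈ r, a.label ≤ t.label)
  def OTree.wfZ : List OTree → Prop
    | [] => True
    | t :: ts => t.label = 0 ∧ t.wf ∧ OTree.wfZ ts
  def OTree.wfP : List OTree → Prop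
    | [] => True
    | t :: ts => 0 < t.label ∧ t.wf ∧ OTree.wfP ts
end

/-- The order `⊑` on ω-trees: `TSub t t'` iff the root labels are `≼`-related,
the `0`-labeled subtree lists have the same length and are componentwise
related, and the positively labeled subtree lists are either both empty, or
both nonempty with the last of the first related to the last of the second and
a strictly monotone (Higman-style) embedding of the first list into the second
with componentwise relatedness. -/
inductive TSub : OTree → OTree → Prop where
  | nilR {s s' : ℕ} {l l' : List OTree} (hs : pre s s') (hlen : l.length = l'.length)
      (hl : ∀ i : Fin l.length, TSub (l.get i) (l'.get (Fin.cast hlen i))) :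
      TSub (.node s l []) (.node s' l' [])
  | consR {s s' : ℕ} {l l' r r' : List OTree} (hs : pre s s') (hlen : l.length = l'.length)
      (hl : ∀ i : Fin l.length, TSub (l.get i) (l'.get (Fin.cast hlen i)))
      (hr : r ≠ []) (hr' : r' ≠ [])
      (idx : Fin r.length → Fin r'.length) (hmono : StrictMono idx)
      (hcomp : ∀ i : Fin r.length, TSub (r.get i) (r'.get (idx i)))
      (hlast : ∀ a ∈ r.getLast?, ∀ b ∈ r'.getLast?, TSub a b) :
      TSub (.node s l r) (.node s' l' r')

/-- The restriction of a frame to a subset of its worlds. -/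
def Frame.restrict (F : Frame) (X : Set F.World) : Frame :=
  ⟨{x // x ∈ X}, fun a b => F.rel a.1 b.1⟩

/-- Cluster equivalence: `w ∼ u` iff `w = u` or `R w u ∧ R u w`. -/
def clEq (F : Frame) (w u : F.World) : Prop :=
  w = u ∨ (F.rel w u ∧ F.rel u w)

/-- `w ≤ u` in the inverse of the reflexive closure of the skeleton order:
`w`'s cluster is `≥` `u`'s cluster in the original order. -/
def leInv (F : Frame) (w u : F.World) : Prop := clEq F w u ∨ F.rel u w

/-- The inverse skeleton `sk(F)⁻¹` of `F` is a finite tree: the frame is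
finite, and the induced order on clusters is downward connected and has no
downward branching (it is automatically a partial order on clusters). -/
def SkInvTree (F : Frame) : Prop :=
  Finite F.World ∧
  (∀ m m' : F.World, ∃ w, leInv F w m ∧ leInv F w m') ∧
  (∀ m w w' : F.World, leInv F w m → leInv F w' m → (leInv F w w' ∨ leInv F w' w))

/-- `Represents t F` says that the ω-tree `t` is the representation tree
`rt(F)` of the frame `F`: the root of `t` corresponds to the final cluster `c`
of `F` (labeled by `|c|` if nondegenerate and `0` otherwise), and the subtrees
of the root represent the subframes of `F` obtained by removing `c`, split
into those whose final cluster is degenerate (label `0`) and the rest, with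
the last positively-labeled subtree of minimal root label. -/
inductive Represents : OTree → Frame → Prop where
  | mk {s : ℕ} {l r : List OTree} {F : Frame}
      (c : Set F.World) (part : ℕ → Set F.World)
      (hc : c.Nonempty)
      (hcfinal : ∀ x ∈ c, ∀ y, F.rel x y → y ∈ c)
      (hccluster : ∀ x ∈ c, ∀ y ∈ c, x ≠ y → F.rel x y)
      (hlabel : ((∃ x ∈ c, F.rel x x) ∧ s = Nat.card c) ∨ ((∀ x ∈ c, ¬ F.rel x x) ∧ s = 0))
      (hcover : ∀ w : F.World, w ∈ c ∨ ∃ i, i < (l ++ r).length ∧ w ∈ part i)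
      (hdisj : ∀ i j, i < (l ++ r).length → j < (l ++ r).length → i ≠ j →
          ∀ w, w ∈ part i → w ∉ part j)
      (hdisjc : ∀ i, i < (l ++ r).length → ∀ w ∈ part i, w ∉ c)
      (hne : ∀ i, i < (l ++ r).length → (part i).Nonempty)
      (hsee : ∀ i, i < (l ++ r).length → ∀ w ∈ part i, ∀ x ∈ c, F.rel w x)
      (hnorel : ∀ i j, i < (l ++ r).length → j < (l ++ r).length → i ≠ j →
          ∀ w ∈ part i, ∀ u ∈ part j, ¬ F.rel w u)
      (hclosed : ∀ i, i < (l ++ r).length → ∀ w ∈ part i, ∀ u, F.rel w u →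
          u ∈ c ∨ u ∈ part i)
      (hzero : ∀ t ∈ l, t.label = 0)
      (hpos : ∀ t ∈ r, 0 < t.label)
      (hmin : ∀ a ∈ r.getLast?, ∀ t ∈ r, a.label ≤ t.label)
      (hrec : ∀ i : Fin (l ++ r).length, Represents ((l ++ r).get i) (F.restrict (part i))) :
      Represents (.node s l r) F

section Helpers

lemma exists_surj_fun {α β : Type} (A : Set α) (B : Set β)
    (h0 : 0 < Nat.card A) (hle : Nat.card A ≤ Nat.card B) :
    ∃ σ : β → α, (∀ b ∈ B, σ b ∈ A) ∧ (∀ a ∈ A, ∃ b ∈ B, σ b = a) := by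
  classical
  have hA : Nonempty A ∧ Finite A := Nat.card_pos_iff.mp h0
  have hB : Nonempty B ∧ Finite B := Nat.card_pos_iff.mp (lt_of_lt_of_le h0 hle)
  haveI := hA.2; haveI := hB.2
  obtain ⟨n, ⟨eA⟩⟩ := Finite.exists_equiv_fin A
  obtain ⟨n', ⟨eB⟩⟩ := Finite.exists_equiv_fin B
  have hn : Nat.card A = n := Nat.card_eq_of_equiv_fin eA
  have hn' : Nat.card B = n' := Nat.card_eq_of_equiv_fin eB
  have h0' : 0 < n := hn ▸ h0
  have hle' : n ≤ n' := by omega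
  refine ⟨fun b => if h : b ∈ B then
      (eA.symm ⟨min (eB ⟨b, h⟩).1 (n - 1), by omega⟩).1 else (eA.symm ⟨0, h0'⟩).1, ?_, ?_⟩
  · intro b hb
    simp only [dif_pos hb]
    exact (eA.symm _).2
  · intro a ha
    set i := eA ⟨a, ha⟩ with hi
    have hilt : i.1 < n := i.2
    refine ⟨(eB.symm ⟨i.1, by omega⟩).1, (eB.symm _).2, ?_⟩
    simp only [dif_pos (eB.symm ⟨i.1, by omega⟩).2]
    have h1 : (⟨(eB.symm ⟨i.1, by omega⟩).1, (eB.symm ⟨i.1, by omega⟩).2⟩ : B)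
        = eB.symm ⟨i.1, by omega⟩ := rfl
    simp only [h1, Equiv.apply_symm_apply]
    have h2 : (⟨min i.1 (n - 1), by omega⟩ : Fin n) = i := by
      apply Fin.ext; simp only []; omega
    rw [h2, hi, Equiv.symm_apply_apply]

lemma cluster_all (F : Frame) (trF : ∀ a b c, F.rel a b → F.rel b c → F.rel a c)
    (c : Set F.World) (hccl : ∀ x ∈ c, ∀ y ∈ c, x ≠ y → F.rel x y)
    (x0 : F.World) (hx0 : x0 ∈ c) (hrefl : F.rel x0 x0) :
    ∀ x ∈ c, ∀ y ∈ c, F.rel x y := by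
  have hreflall : ∀ x ∈ c, F.rel x x := by
    intro x hx
    by_cases hxx : x = x0
    · subst hxx; exact hrefl
    · exact trF _ _ _ (hccl x hx x0 hx0 hxx) (hccl x0 hx0 x hx (Ne.symm hxx))
  intro x hx y hy
  by_cases hxy : x = y
  · subst hxy; exact hreflall _ hx
  · exact hccl x hx y hy hxy

lemma repr_struct (H : Frame) (trH : ∀ a b c, H.rel a b → H.rel b c → H.rel a c)
    (t : OTree) (h : Represents t H) (hpos : 0 < t.label) :
    ∃ cH : Set H.World, Nat.card cH = t.label ∧
      (∀ x ∈ cH, ∀ y ∈ cH, H.rel x y) ∧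
      (∀ w, ∀ x ∈ cH, H.rel w x) ∧
      (∀ x ∈ cH, ∀ y, H.rel x y → y ∈ cH) := by
  cases h with
  | mk c part hc hcfinal hccl hlab hcover hdisj hdisjc hne hsee hnorel hclosed hzero hposr hmin hrec =>
    simp only [OTree.label] at hpos ⊢
    rcases hlab with ⟨⟨x0, hx0, hrefl⟩, hs⟩ | ⟨_, hs⟩
    · have hall := cluster_all H trH c hccl x0 hx0 hrefl
      refine ⟨c, hs.symm, hall, ?_, hcfinal⟩
      intro w x hx
      rcases hcover w with hw | ⟨i, hi, hw⟩
      · exact hall w hw x hx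
      · exact hsee i hi w hw x hx
    · omega

lemma tsub_label_pre {a b : OTree} (h : TSub a b) : pre a.label b.label := by
  cases h with
  | nilR hs _ _ => exact hs
  | consR hs _ _ _ _ _ _ _ _ => exact hs

lemma restrict_trans (F : Frame) (X : Set F.World)
    (trF : ∀ a b c, F.rel a b → F.rel b c → F.rel a c) :
    ∀ a b c : (F.restrict X).World, (F.restrict X).rel a b → (F.restrict X).rel b c →
      (F.restrict X).rel a c :=
  fun a b c hab hbc => trF a.1 b.1 c.1 hab hbc

lemma restrict_finite (F : Frame) (X : Set F.World) (h : Finite F.World) :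
    Finite (F.restrict X).World := by
  haveI := h
  exact inferInstanceAs (Finite {x // x ∈ X})

lemma build_sigma (F G : Frame) (hFfin : Finite F.World) (hGfin : Finite G.World)
    (trF : ∀ a b c, F.rel a b → F.rel b c → F.rel a c)
    (trG : ∀ a b c, G.rel a b → G.rel b c → G.rel a c)
    (c : Set F.World) (c' : Set G.World) (s s' : ℕ)
    (hc : c.Nonempty) (hc' : c'.Nonempty)
    (hccl : ∀ x ∈ c, ∀ y ∈ c, x ≠ y → F.rel x y)
    (hccl' : ∀ x ∈ c', ∀ y ∈ c', x ≠ y → G.rel x y)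
    (hlab : ((∃ x ∈ c, F.rel x x) ∧ s = Nat.card c) ∨ ((∀ x ∈ c, ¬ F.rel x x) ∧ s = 0))
    (hlab' : ((∃ x ∈ c', G.rel x x) ∧ s' = Nat.card c') ∨ ((∀ x ∈ c', ¬ G.rel x x) ∧ s' = 0))
    (hcf : ∀ x ∈ c, ∀ y, F.rel x y → y ∈ c)
    (hpre : pre s s') :
    ∃ σ : G.World → F.World, (∀ w ∈ c', σ w ∈ c) ∧ (∀ v ∈ c, ∃ w ∈ c', σ w = v) ∧
      (∀ w ∈ c', ∀ u ∈ c', G.rel w u → F.rel (σ w) (σ u)) ∧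
      (∀ w ∈ c', ∀ v, F.rel (σ w) v → ∃ u ∈ c', G.rel w u ∧ σ u = v) := by
  classical
  haveI := hFfin; haveI := hGfin
  rcases hpre with ⟨hs0, hs0'⟩ | ⟨hs, hss⟩
  · -- degenerate case
    have hcpos : 0 < Nat.card c := Nat.card_pos_iff.mpr ⟨hc.to_subtype, inferInstance⟩
    have hirr : ∀ x ∈ c, ¬ F.rel x x := by
      rcases hlab with ⟨_, hcard⟩ | ⟨h, _⟩
      · omega
      · exact h
    have hirr' : ∀ x ∈ c', ¬ G.rel x x := by
      have hcpos' : 0 < Nat.card c' := Nat.card_pos_iff.mpr ⟨hc'.to_subtype, inferInstance⟩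
      rcases hlab' with ⟨_, hcard⟩ | ⟨h, _⟩
      · omega
      · exact h
    obtain ⟨x0, hx0⟩ := hc
    obtain ⟨x0', hx0'⟩ := hc'
    have huniq : ∀ y ∈ c, y = x0 := by
      intro y hy
      by_contra hne
      exact hirr x0 hx0 (trF _ _ _ (hccl x0 hx0 y hy (fun h => hne h.symm)) (hccl y hy x0 hx0 hne))
    have huniq' : ∀ y ∈ c', y = x0' := by
      intro y hy
      by_contra hne
      exact hirr' x0' hx0'
        (trG _ _ _ (hccl' x0' hx0' y hy (fun h => hne h.symm)) (hccl' y hy x0' hx0' hne))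
    refine ⟨fun _ => x0, fun _ _ => hx0, ?_, ?_, ?_⟩
    · intro v hv; exact ⟨x0', hx0', (huniq v hv).symm⟩
    · intro w hw u hu hrel
      exact absurd hrel (by rw [huniq' w hw, huniq' u hu]; exact hirr' x0' hx0')
    · intro w hw v hrel
      have hrel0 : F.rel x0 v := hrel
      have hv : v ∈ c := hcf x0 hx0 v hrel0
      rw [huniq v hv] at hrel0
      exact absurd hrel0 (hirr x0 hx0)
  · -- nondegenerate case
    have hs' : 0 < s' := by omega
    have hlab1 : (∃ x ∈ c, F.rel x x) ∧ s = Nat.card c := by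
      rcases hlab with h | ⟨_, h⟩
      · exact h
      · omega
    have hlab1' : (∃ x ∈ c', G.rel x x) ∧ s' = Nat.card c' := by
      rcases hlab' with h | ⟨_, h⟩
      · exact h
      · omega
    obtain ⟨⟨x0, hx0, hrefl⟩, hcard⟩ := hlab1
    obtain ⟨⟨x0', hx0', hrefl'⟩, hcard'⟩ := hlab1'
    have hallF := cluster_all F trF c hccl x0 hx0 hrefl
    have hallG := cluster_all G trG c' hccl' x0' hx0' hrefl'
    obtain ⟨σ, hσc, hσs⟩ := exists_surj_fun c c' (by omega) (by omega)
    refine ⟨σ, hσc, hσs, ?_, ?_⟩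
    · intro w hw u hu _
      exact hallF _ (hσc w hw) _ (hσc u hu)
    · intro w hw v hrel
      have hv : v ∈ c := hcf _ (hσc w hw) v hrel
      obtain ⟨u, hu, hσu⟩ := hσs v hv
      exact ⟨u, hu, hallG w hw u hu, hσu⟩

lemma matched_g (F G : Frame) (c : Set F.World) (P : Set F.World) (Q : Set G.World)
    (hPne : P.Nonempty)
    (hseeP : ∀ w ∈ P, ∀ x ∈ c, F.rel w x)
    (hclosedP : ∀ w ∈ P, ∀ u, F.rel w u → u ∈ c ∨ u ∈ P)
    (hred : Reducible (G.restrict Q) (F.restrict P)) :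
    ∃ gk : G.World → F.World,
      (∀ w ∈ Q, ∀ u ∈ Q, G.rel w u → F.rel (gk w) (gk u)) ∧
      (∀ w ∈ Q, ∀ x ∈ c, F.rel (gk w) x) ∧
      (∀ w ∈ Q, ∀ v, F.rel (gk w) v → v ∈ c ∨ ∃ u ∈ Q, G.rel w u ∧ gk u = v) ∧
      (∀ v ∈ P, ∃ w ∈ Q, gk w = v) := by
  classical
  obtain ⟨f, fsurj, ffwd, fback⟩ := hred
  obtain ⟨p0, hp0⟩ := hPne
  refine ⟨fun w => if h : w ∈ Q then (f ⟨w, h⟩).1 else p0, ?_, ?_, ?_, ?_⟩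
  · intro w hw u hu hrel
    simp only [dif_pos hw, dif_pos hu]
    exact ffwd ⟨w, hw⟩ ⟨u, hu⟩ hrel
  · intro w hw x hx
    simp only [dif_pos hw]
    exact hseeP _ (f ⟨w, hw⟩).2 x hx
  · intro w hw v hrel
    simp only [dif_pos hw] at hrel
    rcases hclosedP _ (f ⟨w, hw⟩).2 v hrel with hv | hv
    · exact Or.inl hv
    · have hrel' : (F.restrict P).rel (f ⟨w, hw⟩) ⟨v, hv⟩ := hrel
      obtain ⟨u, hru, hfu⟩ := fback ⟨w, hw⟩ ⟨v, hv⟩ hrel'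
      refine Or.inr ⟨u.1, u.2, hru, ?_⟩
      simp only [dif_pos u.2]
      have : (⟨u.1, u.2⟩ : (G.restrict Q).World) = u := rfl
      rw [this, hfu]
  · intro v hv
    obtain ⟨w, hw⟩ := fsurj ⟨v, hv⟩
    refine ⟨w.1, w.2, ?_⟩
    simp only [dif_pos w.2]
    have : (⟨w.1, w.2⟩ : (G.restrict Q).World) = w := rfl
    rw [this, hw]

lemma unmatched_g (F G : Frame)
    (trF : ∀ a b c, F.rel a b → F.rel b c → F.rel a c)
    (trG : ∀ a b c, G.rel a b → G.rel b c → G.rel a c)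
    (c : Set F.World) (P : Set F.World) (Q : Set G.World)
    (hseeP : ∀ w ∈ P, ∀ x ∈ c, F.rel w x)
    (hclosedP : ∀ w ∈ P, ∀ u, F.rel w u → u ∈ c ∨ u ∈ P)
    (tP tQ : OTree) (hRP : Represents tP (F.restrict P)) (hRQ : Represents tQ (G.restrict Q))
    (hpP : 0 < tP.label) (hle : tP.label ≤ tQ.label) :
    ∃ gk : G.World → F.World,
      (∀ w ∈ Q, ∀ u ∈ Q, G.rel w u → F.rel (gk w) (gk u)) ∧
      (∀ w ∈ Q, ∀ x ∈ c, F.rel (gk w) x) ∧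
      (∀ w ∈ Q, ∀ v, F.rel (gk w) v → v ∈ c ∨ ∃ u ∈ Q, G.rel w u ∧ gk u = v) := by
  classical
  obtain ⟨d, hdcard, hdall, hdsee, hdcl⟩ :=
    repr_struct _ (restrict_trans F P trF) tP hRP hpP
  obtain ⟨e, hecard, heall, hesee, hecl⟩ :=
    repr_struct _ (restrict_trans G Q trG) tQ hRQ (lt_of_lt_of_le hpP hle)
  obtain ⟨τ, hτd, hτs⟩ := exists_surj_fun d e (by omega) (by omega)
  have hene : Nonempty e := (Nat.card_pos_iff.mp (by omega : 0 < Nat.card e)).1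
  obtain ⟨b0⟩ := hene
  refine ⟨fun w => if h : w ∈ Q then
      (τ (if (⟨w, h⟩ : (G.restrict Q).World) ∈ e then ⟨w, h⟩ else b0.1)).1 else (τ b0.1).1,
      ?_, ?_, ?_⟩
  all_goals
    have hgd : ∀ w (h : w ∈ Q),
        ∃ p ∈ d, (τ (if (⟨w, h⟩ : (G.restrict Q).World) ∈ e then ⟨w, h⟩ else b0.1)).1 = p.1 := by
      intro w h
      by_cases h2 : (⟨w, h⟩ : (G.restrict Q).World) ∈ e
      · exact ⟨τ ⟨w, h⟩, hτd _ h2, congrArg (fun x => (τ x).1) (if_pos h2)⟩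
      · exact ⟨τ b0.1, hτd _ b0.2, congrArg (fun x => (τ x).1) (if_neg h2)⟩
  · intro w hw u hu _
    simp only [dif_pos hw, dif_pos hu]
    obtain ⟨p, hp, hep⟩ := hgd w hw
    obtain ⟨q, hq, heq⟩ := hgd u hu
    rw [hep, heq]
    exact hdall p hp q hq
  · intro w hw x hx
    simp only [dif_pos hw]
    obtain ⟨p, hp, hep⟩ := hgd w hw
    rw [hep]
    exact hseeP p.1 p.2 x hx
  · intro w hw v hrel
    simp only [dif_pos hw] at hrel
    obtain ⟨p, hp, hep⟩ := hgd w hw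
    rw [hep] at hrel
    rcases hclosedP p.1 p.2 v hrel with hv | hv
    · exact Or.inl hv
    · have hrel' : (F.restrict P).rel p ⟨v, hv⟩ := hrel
      have hvd : (⟨v, hv⟩ : (F.restrict P).World) ∈ d := hdcl p hp _ hrel'
      obtain ⟨b, hb, hτb⟩ := hτs ⟨v, hv⟩ hvd
      refine Or.inr ⟨b.1, b.2, hesee ⟨w, hw⟩ b hb, ?_⟩
      simp only [dif_pos b.2]
      have hbe : (⟨b.1, b.2⟩ : (G.restrict Q).World) = b := rfl
      exact (congrArg (fun x => (τ x).1)
        (if_pos (show (⟨b.1, b.2⟩ : (G.restrict Q).World) ∈ e from hb))).trans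
        (congrArg Subtype.val hτb)

lemma glue (F G : Frame)
    (c : Set F.World) (c' : Set G.World)
    (N' : ℕ) (part' : ℕ → Set G.World)
    (hcover' : ∀ w : G.World, w ∈ c' ∨ ∃ i, i < N' ∧ w ∈ part' i)
    (hdisj' : ∀ i j, i < N' → j < N' → i ≠ j → ∀ w, w ∈ part' i → w ∉ part' j)
    (hdisjc' : ∀ i, i < N' → ∀ w ∈ part' i, w ∉ c')
    (hcfinal' : ∀ x ∈ c', ∀ y, G.rel x y → y ∈ c')
    (hsee' : ∀ i, i < N' → ∀ w ∈ part' i, ∀ x ∈ c', G.rel w x)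
    (hclosed' : ∀ i, i < N' → ∀ w ∈ part' i, ∀ u, G.rel w u → u ∈ c' ∨ u ∈ part' i)
    (σ : G.World → F.World)
    (hσc : ∀ w ∈ c', σ w ∈ c)
    (hσs : ∀ v ∈ c, ∃ w ∈ c', σ w = v)
    (hσrel : ∀ w ∈ c', ∀ u ∈ c', G.rel w u → F.rel (σ w) (σ u))
    (hσback : ∀ w ∈ c', ∀ v, F.rel (σ w) v → ∃ u ∈ c', G.rel w u ∧ σ u = v)
    (g : ℕ → G.World → F.World)
    (hg1 : ∀ k, k < N' → ∀ w ∈ part' k, ∀ u ∈ part' k, G.rel w u → F.rel (g k w) (g k u))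
    (hg3 : ∀ k, k < N' → ∀ w ∈ part' k, ∀ x ∈ c, F.rel (g k w) x)
    (hg2 : ∀ k, k < N' → ∀ w ∈ part' k, ∀ v, F.rel (g k w) v →
        v ∈ c ∨ ∃ u ∈ part' k, G.rel w u ∧ g k u = v)
    (hcov : ∀ v : F.World, v ∈ c ∨ ∃ k, k < N' ∧ ∃ w ∈ part' k, g k w = v) :
    Reducible G F := by
  classical
  set f : G.World → F.World := fun w => if h : w ∈ c' then σ w else
      g (Classical.choose ((hcover' w).resolve_left h)) w with hf
  have hfc : ∀ w, w ∈ c' → f w = σ w := by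
    intro w h
    simp only [hf, dif_pos h]
  have hfp : ∀ w k, k < N' → w ∈ part' k → f w = g k w := by
    intro w k hk hw
    have hnc : w ∉ c' := hdisjc' k hk w hw
    have h1 := Classical.choose_spec ((hcover' w).resolve_left hnc)
    have h2 : Classical.choose ((hcover' w).resolve_left hnc) = k := by
      by_contra hne
      exact hdisj' _ k h1.1 hk hne w h1.2 hw
    simp only [hf, dif_neg hnc]
    rw [h2]
  refine ⟨f, ?_, ?_, ?_⟩
  · intro v
    rcases hcov v with hv | ⟨k, hk, w, hw, hgw⟩
    · obtain ⟨w, hw, hσw⟩ := hσs v hv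
      exact ⟨w, by rw [hfc w hw]; exact hσw⟩
    · exact ⟨w, by rw [hfp w k hk hw]; exact hgw⟩
  · intro w u hrel
    by_cases hw : w ∈ c'
    · have hu : u ∈ c' := hcfinal' w hw u hrel
      rw [hfc w hw, hfc u hu]
      exact hσrel w hw u hu hrel
    · rcases hcover' w with hw' | ⟨k, hk, hwk⟩
      · exact absurd hw' hw
      rcases hclosed' k hk w hwk u hrel with hu | hu
      · rw [hfp w k hk hwk, hfc u hu]
        exact hg3 k hk w hwk _ (hσc u hu)
      · rw [hfp w k hk hwk, hfp u k hk hu]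
        exact hg1 k hk w hwk u hu hrel
  · intro w v hrel
    by_cases hw : w ∈ c'
    · rw [hfc w hw] at hrel
      obtain ⟨u, hu, hwu, hσu⟩ := hσback w hw v hrel
      exact ⟨u, hwu, by rw [hfc u hu]; exact hσu⟩
    · rcases hcover' w with hw' | ⟨k, hk, hwk⟩
      · exact absurd hw' hw
      rw [hfp w k hk hwk] at hrel
      rcases hg2 k hk w hwk v hrel with hv | ⟨u, hu, hwu, hgu⟩
      · obtain ⟨u, hu, hσu⟩ := hσs v hv
        exact ⟨u, hsee' k hk w hwk u hu, by rw [hfc u hu]; exact hσu⟩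
      · exact ⟨u, hwu, by rw [hfp u k hk hu]; exact hgu⟩

lemma key_reducible (t t' : OTree) (h : TSub t t') :
    ∀ (F G : Frame), Finite F.World → Finite G.World →
    (∀ a b c, F.rel a b → F.rel b c → F.rel a c) →
    (∀ a b c, G.rel a b → G.rel b c → G.rel a c) →
    Represents t F → Represents t' G → Reducible G F := by
  induction h with
  | @nilR s s' l l' hs hlen hl ih =>
    intro F G hFfin hGfin trF trG hRF hRG
    classical
    cases hRF with
    | mk c part hc hcfinal hccl hlab hcover hdisj hdisjc hne hsee hnorel hclosed hzero hposF hminF hrec =>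
    cases hRG with
    | mk c' part' hc' hcfinal' hccl' hlab' hcover' hdisj' hdisjc' hne' hsee' hnorel' hclosed' hzero' hposG hminG hrec' =>
    obtain ⟨σ, hσc, hσs, hσrel, hσback⟩ :=
      build_sigma F G hFfin hGfin trF trG c c' s s' hc hc' hccl hccl' hlab hlab' hcfinal hs
    have hNF : (l ++ ([] : List OTree)).length = l.length := by simp
    have hNG : (l' ++ ([] : List OTree)).length = l'.length := by simp
    have Hk : ∀ k, k < (l' ++ ([] : List OTree)).length → ∃ gk : G.World → F.World,
        (∀ w ∈ part' k, ∀ u ∈ part' k, G.rel w u → F.rel (gk w) (gk u)) ∧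
        (∀ w ∈ part' k, ∀ x ∈ c, F.rel (gk w) x) ∧
        (∀ w ∈ part' k, ∀ v, F.rel (gk w) v → v ∈ c ∨ ∃ u ∈ part' k, G.rel w u ∧ gk u = v) ∧
        (∀ v ∈ part k, ∃ w ∈ part' k, gk w = v) := by
      intro k hk
      have hkl' : k < l'.length := by omega
      have hkl : k < l.length := by omega
      have hkNF : k < (l ++ ([] : List OTree)).length := by omega
      have hred : Reducible (G.restrict (part' k)) (F.restrict (part k)) := by
        refine ih ⟨k, hkl⟩ (F.restrict (part k)) (G.restrict (part' k))
          (restrict_finite F _ hFfin) (restrict_finite G _ hGfin)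
          (restrict_trans F _ trF) (restrict_trans G _ trG) ?_ ?_
        · have h1 := hrec ⟨k, hkNF⟩
          have h2 : (l ++ ([] : List OTree)).get ⟨k, hkNF⟩ = l.get ⟨k, hkl⟩ := by
            simp only [List.get_eq_getElem]
            exact List.getElem_append_left hkl
          rwa [h2] at h1
        · have h1 := hrec' ⟨k, hk⟩
          have h2 : (l' ++ ([] : List OTree)).get ⟨k, hk⟩ = l'.get (Fin.cast hlen ⟨k, hkl⟩) := by
            simp only [List.get_eq_getElem]
            exact List.getElem_append_left hkl'
          rwa [h2] at h1
      exact matched_g F G c (part k) (part' k) (hne k hkNF) (hsee k hkNF) (hclosed k hkNF) hred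
    choose gk hgk1 hgk3 hgk2 hgkcov using Hk
    set g : ℕ → G.World → F.World := fun k => if h : k < (l' ++ ([] : List OTree)).length
      then gk k h else fun _ => hc.choose with hg
    have hgeq : ∀ k (h : k < (l' ++ ([] : List OTree)).length), g k = gk k h := by
      intro k h
      simp only [hg, dif_pos h]
    refine glue F G c c' _ part' hcover' hdisj' hdisjc' hcfinal' hsee' hclosed'
      σ hσc hσs hσrel hσback g ?_ ?_ ?_ ?_
    · intro k hk; rw [hgeq k hk]; exact hgk1 k hk
    · intro k hk; rw [hgeq k hk]; exact hgk3 k hk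
    · intro k hk; rw [hgeq k hk]; exact hgk2 k hk
    · intro v
      rcases hcover v with hv | ⟨i, hi, hv⟩
      · exact Or.inl hv
      · have hk : i < (l' ++ ([] : List OTree)).length := by omega
        obtain ⟨w, hw, he⟩ := hgkcov i hk v hv
        exact Or.inr ⟨i, hk, w, hw, by rw [hgeq i hk]; exact he⟩
  | @consR s s' l l' r r' hs hlen hl hr hr' idx hmono hcomp hlast ihl ihcomp ihlast =>
    intro F G hFfin hGfin trF trG hRF hRG
    classical
    cases hRF with
    | mk c part hc hcfinal hccl hlab hcover hdisj hdisjc hne hsee hnorel hclosed hzero hposF hminF hrec =>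
    cases hRG with
    | mk c' part' hc' hcfinal' hccl' hlab' hcover' hdisj' hdisjc' hne' hsee' hnorel' hclosed' hzero' hposG hminG hrec' =>
    obtain ⟨σ, hσc, hσs, hσrel, hσback⟩ :=
      build_sigma F G hFfin hGfin trF trG c c' s s' hc hc' hccl hccl' hlab hlab' hcfinal hs
    have hNF : (l ++ r).length = l.length + r.length := List.length_append
    have hNG : (l' ++ r').length = l'.length + r'.length := List.length_append
    have hrpos : 0 < r.length := List.length_pos_iff.mpr hr
    have hrpos' : 0 < r'.length := List.length_pos_iff.mpr hr'
    set M : ℕ → ℕ → Prop := fun k i => (k < l'.length ∧ i = k) ∨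
      ∃ i₀ : Fin r.length, k = l'.length + (idx i₀).1 ∧ i = l.length + i₀.1 with hM
    have hmatch_total : ∀ i, i < (l ++ r).length → ∃ k, k < (l' ++ r').length ∧ M k i := by
      intro i hi
      by_cases hil : i < l.length
      · exact ⟨i, by omega, Or.inl ⟨by omega, rfl⟩⟩
      · have hi0 : i - l.length < r.length := by omega
        refine ⟨l'.length + (idx ⟨i - l.length, hi0⟩).1, ?_,
          Or.inr ⟨⟨i - l.length, hi0⟩, rfl, (by omega : i = l.length + (i - l.length))⟩⟩
        have := (idx ⟨i - l.length, hi0⟩).2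
        omega
    have Hk : ∀ k, k < (l' ++ r').length → ∃ gk : G.World → F.World,
        (∀ w ∈ part' k, ∀ u ∈ part' k, G.rel w u → F.rel (gk w) (gk u)) ∧
        (∀ w ∈ part' k, ∀ x ∈ c, F.rel (gk w) x) ∧
        (∀ w ∈ part' k, ∀ v, F.rel (gk w) v → v ∈ c ∨ ∃ u ∈ part' k, G.rel w u ∧ gk u = v) ∧
        (∀ i, M k i → ∀ v ∈ part i, ∃ w ∈ part' k, gk w = v) := by
      intro k hk
      by_cases hkl' : k < l'.length
      · -- matched zero part, i = k
        have hkl : k < l.length := by omega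
        have hkNF : k < (l ++ r).length := by omega
        have hred : Reducible (G.restrict (part' k)) (F.restrict (part k)) := by
          refine ihl ⟨k, hkl⟩ (F.restrict (part k)) (G.restrict (part' k))
            (restrict_finite F _ hFfin) (restrict_finite G _ hGfin)
            (restrict_trans F _ trF) (restrict_trans G _ trG) ?_ ?_
          · have h1 := hrec ⟨k, hkNF⟩
            have h2 : (l ++ r).get ⟨k, hkNF⟩ = l.get ⟨k, hkl⟩ := by
              simp only [List.get_eq_getElem]
              exact List.getElem_append_left hkl
            rwa [h2] at h1
          · have h1 := hrec' ⟨k, hk⟩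
            have h2 : (l' ++ r').get ⟨k, hk⟩ = l'.get (Fin.cast hlen ⟨k, hkl⟩) := by
              simp only [List.get_eq_getElem]
              exact List.getElem_append_left hkl'
            rwa [h2] at h1
        obtain ⟨gk, h1, h3, h2, hcov⟩ :=
          matched_g F G c (part k) (part' k) (hne k hkNF) (hsee k hkNF) (hclosed k hkNF) hred
        refine ⟨gk, h1, h3, h2, ?_⟩
        intro i hMk v hv
        have hik : i = k := by
          rcases hMk with ⟨_, e⟩ | ⟨i₀, e1, _⟩
          · exact e
          · omega
        subst hik
        exact hcov v hv
      · have hj : k - l'.length < r'.length := by omega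
        by_cases hex : ∃ i₀ : Fin r.length, (idx i₀).1 = k - l'.length
        · -- matched positive part
          obtain ⟨i₀, hi₀⟩ := hex
          have hkeq : k = l'.length + (idx i₀).1 := by omega
          have hiNF : l.length + i₀.1 < (l ++ r).length := by
            have := i₀.2; omega
          have hred : Reducible (G.restrict (part' k))
              (F.restrict (part (l.length + i₀.1))) := by
            refine ihcomp i₀ (F.restrict (part (l.length + i₀.1))) (G.restrict (part' k))
              (restrict_finite F _ hFfin) (restrict_finite G _ hGfin)
              (restrict_trans F _ trF) (restrict_trans G _ trG) ?_ ?_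
            · have h1 := hrec ⟨l.length + i₀.1, hiNF⟩
              have h2 : (l ++ r).get ⟨l.length + i₀.1, hiNF⟩ = r.get i₀ := by
                simp only [List.get_eq_getElem]
                rw [List.getElem_append_right (by omega)]
                congr 1
                omega
              rwa [h2] at h1
            · have h1 := hrec' ⟨k, hk⟩
              have h2 : (l' ++ r').get ⟨k, hk⟩ = r'.get (idx i₀) := by
                simp only [List.get_eq_getElem]
                rw [List.getElem_append_right (by omega)]
                congr 1
                omega
              rwa [h2] at h1
          obtain ⟨gk, h1, h3, h2, hcov⟩ :=
            matched_g F G c (part (l.length + i₀.1)) (part' k)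
              (hne _ hiNF) (hsee _ hiNF) (hclosed _ hiNF) hred
          refine ⟨gk, h1, h3, h2, ?_⟩
          intro i hMk v hv
          have hik : i = l.length + i₀.1 := by
            rcases hMk with ⟨h', _⟩ | ⟨i₀', e1, e2⟩
            · omega
            · have he : (idx i₀').1 = (idx i₀).1 := by omega
              have : i₀' = i₀ := hmono.injective (Fin.ext he)
              subst this
              omega
          subst hik
          exact hcov v hv
        · -- unmatched positive part
          have hiL : l.length + (r.length - 1) < (l ++ r).length := by omega
          have hRP : Represents (r.getLast hr)
              (F.restrict (part (l.length + (r.length - 1)))) := by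
            have h1 := hrec ⟨l.length + (r.length - 1), hiL⟩
            have h2 : (l ++ r).get ⟨l.length + (r.length - 1), hiL⟩ = r.getLast hr := by
              simp only [List.get_eq_getElem]
              rw [List.getElem_append_right (by omega), List.getLast_eq_getElem hr]
              congr 1
              omega
            rwa [h2] at h1
          have hRQ : Represents (r'.get ⟨k - l'.length, hj⟩) (G.restrict (part' k)) := by
            have h1 := hrec' ⟨k, hk⟩
            have h2 : (l' ++ r').get ⟨k, hk⟩ = r'.get ⟨k - l'.length, hj⟩ := by
              simp only [List.get_eq_getElem]
              exact List.getElem_append_right (by omega)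
            rwa [h2] at h1
          have hpP : 0 < (r.getLast hr).label := hposF _ (List.getLast_mem hr)
          have hle : (r.getLast hr).label ≤ (r'.get ⟨k - l'.length, hj⟩).label := by
            have h1 : pre (r.getLast hr).label (r'.getLast hr').label :=
              tsub_label_pre (hlast _ (by rw [List.getLast?_eq_getLast hr]; rfl)
                _ (by rw [List.getLast?_eq_getLast hr']; rfl))
            have h2 : (r'.getLast hr').label ≤ (r'.get ⟨k - l'.length, hj⟩).label := by
              refine hminG _ ?_ _ ?_
              · rw [List.getLast?_eq_getLast hr']; rfl
              · simp only [List.get_eq_getElem]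
                exact List.getElem_mem hj
            rcases h1 with ⟨e, _⟩ | ⟨_, hle'⟩
            · omega
            · omega
          obtain ⟨gk, h1, h3, h2⟩ :=
            unmatched_g F G trF trG c (part (l.length + (r.length - 1))) (part' k)
              (hsee _ hiL) (hclosed _ hiL) _ _ hRP hRQ hpP hle
          refine ⟨gk, h1, h3, h2, ?_⟩
          intro i hMk v hv
          exfalso
          rcases hMk with ⟨h', _⟩ | ⟨i₀, e1, _⟩
          · omega
          · exact hex ⟨i₀, by omega⟩
    choose gk hgk1 hgk3 hgk2 hgkcov using Hk
    set g : ℕ → G.World → F.World := fun k => if h : k < (l' ++ r').length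
      then gk k h else fun _ => hc.choose with hg
    have hgeq : ∀ k (h : k < (l' ++ r').length), g k = gk k h := by
      intro k h
      simp only [hg, dif_pos h]
    refine glue F G c c' _ part' hcover' hdisj' hdisjc' hcfinal' hsee' hclosed'
      σ hσc hσs hσrel hσback g ?_ ?_ ?_ ?_
    · intro k hk; rw [hgeq k hk]; exact hgk1 k hk
    · intro k hk; rw [hgeq k hk]; exact hgk3 k hk
    · intro k hk; rw [hgeq k hk]; exact hgk2 k hk
    · intro v
      rcases hcover v with hv | ⟨i, hi, hv⟩
      · exact Or.inl hv
      · obtain ⟨k, hk, hMk⟩ := hmatch_total i hi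
        obtain ⟨w, hw, he⟩ := hgkcov k hk i hMk v hv
        exact Or.inr ⟨k, hk, w, hw, by rw [hgeq k hk]; exact he⟩

end Helpers

/-- Let `F` and `G` be finite transitive frames validating `Wid₁⁺` whose
inverse skeletons are finite trees, with representation trees `t = rt F` and
`t' = rt G`. If `t ⊑ t'`, then `G` is reducible to `F`. -/
theorem tsub_reprTrees_reducible (F G : Frame)
    (htrF : ∀ a b c, F.rel a b → F.rel b c → F.rel a c)
    (htrG : ∀ a b c, G.rel a b → G.rel b c → G.rel a c)
    (hwF : Valid F (widPlus 1)) (hwG : Valid G (widPlus 1))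
    (htreeF : SkInvTree F) (htreeG : SkInvTree G)
    (t t' : OTree) (ht : Represents t F) (ht' : Represents t' G)
    (hsub : TSub t t') :
    Reducible G F :=
  key_reducible t t' hsub F G htreeF.1 htreeG.1 htrF htrG ht ht'
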